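/- Let τ be a delay function with inf_{s∈[0,t]} τ(s) > 0 for all t ≥ 0, σ₁(t) = t − τ(t), and n: ℝ → ℕ the function with t ∈ D_{n(t)} \ D_{n(t)+1} for all t. Then for every t ∈ ℝ₊: (a) n(t) ≥ 1; (b) n(σ₁(t)) = n(t) − 1; (c) σ_k(t) ≥ 0 for every k ∈ {0, ..., n(t)−1}; (d) σ_{n(t)}(t) ∈ [−h(0), 0), where h(0) = −inf_{s≥0}(s − τ(s)) (with σ_{n(t)}(t) > −∞ understood when h(0) = ∞). -/
import Mathlib


open Set

/-- The sets `Dₙ` on which the `n`-th iterated delay function is defined: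
`D₀ = ℝ`, `Dₙ = {t ∈ ℝ₊ : t − τ(t) ∈ Dₙ₋₁}`. -/
def Dset (τ : ℝ → ℝ) : ℕ → Set ℝ
  | 0 => Set.univ
  | n + 1 => {t : ℝ | 0 ≤ t ∧ t - τ t ∈ Dset τ n}

/-- The iterated delay functions: `σ₀ = id`, `σₙ(t) = σₙ₋₁(t − τ(t))`. -/
def iterDelay (τ : ℝ → ℝ) : ℕ → ℝ → ℝ
  | 0 => fun t => t
  | n + 1 => fun t => iterDelay τ n (t - τ t)

lemma Dset_succ_subset (τ : ℝ → ℝ) : ∀ n, Dset τ (n + 1) ⊆ Dset τ n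
  | 0 => fun _ _ => trivial
  | n + 1 => fun t ht => ⟨ht.1, Dset_succ_subset τ n ht.2⟩

lemma Dset_anti (τ : ℝ → ℝ) {m n : ℕ} (h : m ≤ n) : Dset τ n ⊆ Dset τ m := by
  induction h with
  | refl => exact subset_rfl
  | step _ ih => exact (Dset_succ_subset τ _).trans ih

lemma iter_nonneg (τ : ℝ → ℝ) : ∀ k (t : ℝ), t ∈ Dset τ (k + 1) → 0 ≤ iterDelay τ k t
  | 0, t, ht => ht.1
  | k + 1, t, ht => iter_nonneg τ k (t - τ t) ht.2

lemma mem_succ_of_nonneg (τ : ℝ → ℝ) :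
    ∀ k (t : ℝ), t ∈ Dset τ k → 0 ≤ iterDelay τ k t → t ∈ Dset τ (k + 1)
  | 0, t, _, h0 => ⟨h0, trivial⟩
  | k + 1, t, ht, h0 => ⟨ht.1, mem_succ_of_nonneg τ k (t - τ t) ht.2 h0⟩

lemma iterDelay_succ' (τ : ℝ → ℝ) :
    ∀ k (t : ℝ), iterDelay τ (k + 1) t = iterDelay τ k t - τ (iterDelay τ k t)
  | 0, t => rfl
  | k + 1, t => iterDelay_succ' τ k (t - τ t)

lemma le_nfun (τ : ℝ → ℝ) (nfun : ℝ → ℕ)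
    (hn : ∀ t : ℝ, t ∈ Dset τ (nfun t) ∧ t ∉ Dset τ (nfun t + 1))
    {k : ℕ} {t : ℝ} (ht : t ∈ Dset τ k) : k ≤ nfun t := by
  by_contra h
  exact (hn t).2 (Dset_anti τ (by omega) ht)

/-- Properties of the counting function `n`: for every `t ≥ 0`, (a) `n(t) ≥ 1`;
(b) `n(t − τ(t)) = n(t) − 1`; (c) `σ_k(t) ≥ 0` for `k ∈ {0, …, n(t)−1}`;
(d) `σ_{n(t)}(t) ∈ [−h(0), 0)`, where the membership in `[−h(0), 0)` is expressed as:
`σ_{n(t)}(t) < 0` and `σ_{n(t)}(t)` is above every lower bound of `{s − τ(s) : s ≥ 0}`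
(so that the lower bound is vacuous when `h(0) = ∞`). -/
theorem stmt_11 (τ : ℝ → ℝ) (hτ : ∀ t : ℝ, 0 ≤ t → 0 < τ t)
    (hinf : ∀ t : ℝ, 0 ≤ t → ∃ δ > (0 : ℝ), ∀ s ∈ Set.Icc (0 : ℝ) t, δ ≤ τ s)
    (nfun : ℝ → ℕ) (hn : ∀ t : ℝ, t ∈ Dset τ (nfun t) ∧ t ∉ Dset τ (nfun t + 1)) :
    ∀ t : ℝ, 0 ≤ t →
      1 ≤ nfun t ∧
      nfun (t - τ t) = nfun t - 1 ∧
      (∀ k : ℕ, k ≤ nfun t - 1 → 0 ≤ iterDelay τ k t) ∧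
      (iterDelay τ (nfun t) t < 0 ∧
        ∀ m : ℝ, (∀ s : ℝ, 0 ≤ s → m ≤ s - τ s) → m ≤ iterDelay τ (nfun t) t) := by
  intro t ht
  have h1 : 1 ≤ nfun t := le_nfun τ nfun hn (⟨ht, trivial⟩ : t ∈ Dset τ 1)
  have hmem : t ∈ Dset τ (nfun t) := (hn t).1
  have hmem' : t ∈ Dset τ (nfun t - 1 + 1) := by rwa [Nat.sub_add_cancel h1]
  -- part (b)
  have hb : nfun (t - τ t) = nfun t - 1 := by
    have hlow : nfun t - 1 ≤ nfun (t - τ t) := le_nfun τ nfun hn hmem'.2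
    have hhigh : nfun (t - τ t) < nfun t := by
      by_contra h
      push_neg at h
      exact (hn t).2 ⟨ht, Dset_anti τ h (hn (t - τ t)).1⟩
    omega
  -- part (c)
  have hc : ∀ k : ℕ, k ≤ nfun t - 1 → 0 ≤ iterDelay τ k t := by
    intro k hk
    exact iter_nonneg τ k t (Dset_anti τ (by omega) hmem)
  refine ⟨h1, hb, hc, ?_, ?_⟩
  · -- part (d), negativity
    by_contra h
    push_neg at h
    exact (hn t).2 (mem_succ_of_nonneg τ (nfun t) t hmem h)
  · -- part (d), lower bound
    intro m hm
    have hs : 0 ≤ iterDelay τ (nfun t - 1) t := hc _ le_rfl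
    have heq : iterDelay τ (nfun t) t =
        iterDelay τ (nfun t - 1) t - τ (iterDelay τ (nfun t - 1) t) := by
      conv_lhs => rw [show nfun t = (nfun t - 1) + 1 by omega]
      exact iterDelay_succ' τ _ t
    rw [heq]
    exact hm _ hs
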